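/- Let a, b, x ∈ ℝⁿ and γ, α > 0 with γ < 1. Define c by c_i = median{a_i - (1-γ)α, b_i, a_i + (1-γ)α} for each i. Then ‖c - x‖_∞ ≤ max{‖b - x‖_∞, ‖a - x‖_∞ - (1-γ)α}. -/
import Mathlib

lemma med_abs (A B X s : ℝ) (hs : 0 < s) :
    |max (A - s) (min B (A + s)) - X| ≤ max |B - X| (|A - X| - s) := by
  rcases le_total B (A - s) with h | h
  · rw [max_eq_left (le_trans (min_le_left _ _) h)]
    rcases le_total X (A - s) with hx | hx
    · refine le_max_of_le_right ?_
      rw [abs_of_nonneg (by linarith)]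
      rcases abs_cases (A - X) with ⟨he, _⟩ | ⟨_, h2⟩ <;> linarith
    · refine le_max_of_le_left ?_
      rw [abs_of_nonpos (by linarith)]
      rcases abs_cases (B - X) with ⟨he, _⟩ | ⟨he, _⟩ <;> linarith
  · rw [max_eq_right (le_min h (by linarith))]
    rcases le_total B (A + s) with h2 | h2
    · rw [min_eq_left h2]; exact le_max_left _ _
    · rw [min_eq_right h2]
      rcases le_total X (A + s) with hx | hx
      · refine le_max_of_le_left ?_
        rw [abs_of_nonneg (by linarith)]
        rcases abs_cases (B - X) with ⟨he, _⟩ | ⟨he, _⟩ <;> linarith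
      · refine le_max_of_le_right ?_
        rw [abs_of_nonpos (by linarith)]
        rcases abs_cases (A - X) with ⟨he, _⟩ | ⟨he, _⟩ <;> linarith

/-- Entrywise median truncation bound (Lemma on median trick, first part). -/
theorem stmt_0 (n : ℕ) (a b x : Fin n → ℝ) (γ α : ℝ)
    (hγ : 0 < γ) (hγ1 : γ < 1) (hα : 0 < α)
    (c : Fin n → ℝ)
    (hc : ∀ i, c i = max (a i - (1 - γ) * α) (min (b i) (a i + (1 - γ) * α))) :
    ‖c - x‖ ≤ max ‖b - x‖ (‖a - x‖ - (1 - γ) * α) := by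
  have hs : 0 < (1 - γ) * α := mul_pos (by linarith) hα
  apply pi_norm_le_iff_of_nonneg (le_max_of_le_left (norm_nonneg _)) |>.mpr
  intro i
  have h1 : |b i - x i| ≤ ‖b - x‖ := by
    simpa using norm_le_pi_norm (b - x) i
  have h2 : |a i - x i| ≤ ‖a - x‖ := by
    simpa using norm_le_pi_norm (a - x) i
  calc ‖(c - x) i‖ = |max (a i - (1-γ)*α) (min (b i) (a i + (1-γ)*α)) - x i| := by
        simp [hc i]
    _ ≤ max |b i - x i| (|a i - x i| - (1-γ)*α) := med_abs _ _ _ _ hs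
    _ ≤ max ‖b - x‖ (‖a - x‖ - (1-γ)*α) := max_le_max h1 (by linarith)
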